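/- A regular tournament on 5 vertices satisfies F(D) = 1 < 2 = Z(D); in particular every 2-element subset of its vertices is a zero forcing set. -/
import Mathlib


/-- The set of out-neighbors of `v` in the digraph with arc relation `A`. -/
def Nout {V : Type} (A : V → V → Prop) (v : V) : Set V := {w | A v w}

/-- The set of in-neighbors of `v`. -/
def Nin {V : Type} (A : V → V → Prop) (v : V) : Set V := {w | A w v}

/-- One application of the color change rule to the set `S` of filled vertices. -/
def Bstep {V : Type} (A : V → V → Prop) (S : Set V) : Set V :=
  S ∪ {w | ∃ v ∈ S, Nout A v \ S = {w}}

/-- `S` is a zero forcing set: iterating the color change rule fills all vertices. -/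
def IsZFS {V : Type} (A : V → V → Prop) (S : Set V) : Prop :=
  ∃ t, (Bstep A)^[t] S = Set.univ

/-- The failed zero forcing number: the maximum cardinality of a failed zero forcing set. -/
noncomputable def Fnum {V : Type} (A : V → V → Prop) : ℕ :=
  sSup {k | ∃ S : Set V, ¬ IsZFS A S ∧ S.ncard = k}

/-- The zero forcing number: the minimum cardinality of a zero forcing set. -/
noncomputable def Znum {V : Type} (A : V → V → Prop) : ℕ :=
  sInf {k | ∃ S : Set V, IsZFS A S ∧ S.ncard = k}

/-- `W` is a critical set: `W` is nonempty and no vertex outside `W` has exactly one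
out-neighbor in `W`. -/
def IsCritical {V : Type} (A : V → V → Prop) (W : Set V) : Prop :=
  W.Nonempty ∧ ∀ v ∈ Wᶜ, (Nout A v ∩ W).ncard ≠ 1

/-- `D` is a directed cycle: either a single vertex with no arcs, or the vertices can be
cyclically labeled so that the arcs are exactly the consecutive ones. -/
def IsDirectedCycle {V : Type} [Fintype V] (A : V → V → Prop) : Prop :=
  (Fintype.card V = 1 ∧ ∀ u v : V, ¬ A u v) ∨
  (2 ≤ Fintype.card V ∧ ∃ e : ZMod (Fintype.card V) ≃ V,
      ∀ i j : ZMod (Fintype.card V), A (e i) (e j) ↔ j = i + 1)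

section aux
variable {V : Type} {A : V → V → Prop}

lemma subset_bstep (S : Set V) : S ⊆ Bstep A S := Set.subset_union_left

lemma bstep_mono {S T : Set V} (h : S ⊆ T) : Bstep A S ⊆ Bstep A T := by
  intro w hw
  rcases hw with hw | ⟨v, hv, hvw⟩
  · exact Or.inl (h hw)
  by_cases hwT : w ∈ T
  · exact Or.inl hwT
  · have hwNout : w ∈ Nout A v := by
      have : w ∈ Nout A v \ S := by rw [hvw]; rfl
      exact this.1
    refine Or.inr ⟨v, h hv, Set.Subset.antisymm ?_ ?_⟩
    · intro x hx
      have : x ∈ Nout A v \ S := ⟨hx.1, fun hxS => hx.2 (h hxS)⟩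
      rw [hvw] at this; exact this
    · intro x hx; rcases hx with rfl; exact ⟨hwNout, hwT⟩

lemma bstep_iter_mono (t : ℕ) {S T : Set V} (h : S ⊆ T) :
    (Bstep A)^[t] S ⊆ (Bstep A)^[t] T := by
  induction t generalizing S T with
  | zero => exact h
  | succ n ih =>
      rw [Function.iterate_succ_apply, Function.iterate_succ_apply]
      exact ih (bstep_mono h)

lemma isZFS_mono {S T : Set V} (h : S ⊆ T) (hS : IsZFS A S) : IsZFS A T := by
  obtain ⟨t, ht⟩ := hS
  exact ⟨t, Set.eq_univ_of_univ_subset (ht ▸ bstep_iter_mono t h)⟩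

variable [Fintype V] (hcard : Fintype.card V = 5) (hA : Irreflexive A)
    (htour : ∀ u v : V, u ≠ v → (A u v ↔ ¬ A v u))
    (hreg : ∀ v : V, (Nout A v).ncard = 2)

include hcard hA htour hreg

lemma compl_ncard (S : Set V) : Sᶜ.ncard = 5 - S.ncard := by
  have := Set.ncard_add_ncard_compl S
  rw [Nat.card_eq_fintype_card, hcard] at this
  omega

lemma nin_ncard (v : V) : (Nin A v).ncard = 2 := by
  have hco : Nin A v = (insert v (Nout A v))ᶜ := by
    ext w
    simp only [Nin, Nout, Set.mem_setOf_eq, Set.mem_compl_iff, Set.mem_insert_iff,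
      not_or]
    constructor
    · intro hwv
      have hne : w ≠ v := by intro h; subst h; exact hA w hwv
      exact ⟨hne, fun hvw => ((htour v w (Ne.symm hne)).1 hvw) hwv⟩
    · rintro ⟨hne, hnvw⟩
      exact (htour w v hne).2 (fun hvw => hnvw hvw)
  have hvn : v ∉ Nout A v := fun h => hA v h
  have h3 : (insert v (Nout A v)).ncard = 3 := by
    rw [Set.ncard_insert_of_notMem hvn, hreg]
  rw [hco, compl_ncard hcard hA htour hreg, h3]

lemma step4 {S : Set V} (h4 : S.ncard = 4) : Bstep A S = Set.univ := by
  have hc : Sᶜ.ncard = 1 := by rw [compl_ncard hcard hA htour hreg, h4]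
  obtain ⟨z, hz⟩ := Set.ncard_eq_one.mp hc
  have hzS : z ∉ S := by
    have : z ∈ Sᶜ := by rw [hz]; rfl
    exact this
  -- z has an in-neighbor p
  have hnin : (Nin A z).ncard = 2 := nin_ncard hcard hA htour hreg z
  obtain ⟨p, hp⟩ := Set.nonempty_of_ncard_ne_zero (by omega : (Nin A z).ncard ≠ 0)
  have hpz : p ≠ z := fun h => hA z (h ▸ hp)
  have hpS : p ∈ S := by
    by_contra hpS
    have : p ∈ Sᶜ := hpS
    rw [hz] at this
    exact hpz this
  have hforce : Nout A p \ S = {z} := by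
    apply Set.Subset.antisymm
    · intro x hx
      have : x ∈ Sᶜ := hx.2
      rw [hz] at this; exact this
    · intro x hx; rcases hx with rfl; exact ⟨hp, hzS⟩
  apply Set.eq_univ_of_forall
  intro w
  by_cases hwS : w ∈ S
  · exact Or.inl hwS
  · have : w ∈ Sᶜ := hwS
    rw [hz] at this
    rcases this with rfl
    exact Or.inr ⟨p, hpS, hforce⟩

lemma step3 {S : Set V} (h3 : S.ncard = 3) : ∃ w ∉ S, w ∈ Bstep A S := by
  have hc : Sᶜ.ncard = 2 := by rw [compl_ncard hcard hA htour hreg, h3]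
  obtain ⟨y, z, hyz, hz⟩ := Set.ncard_eq_two.mp hc
  -- wlog A y z
  have key : ∀ y z : V, y ≠ z → Sᶜ = {y, z} → A y z → ∃ w ∉ S, w ∈ Bstep A S := by
    clear hyz hz y z
    intro y z hyz hz hAyz
    have hyS : y ∉ S := show y ∈ Sᶜ by rw [hz]; exact Or.inl rfl
    have hzS : z ∉ S := show z ∈ Sᶜ by rw [hz]; exact Or.inr rfl
    -- in-neighbors of z : ncard 2, contains y; pick the other one p
    have hninz : (Nin A z).ncard = 2 := nin_ncard hcard hA htour hreg z
    obtain ⟨a, b, hab, hnz⟩ := Set.ncard_eq_two.mp hninz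
    have hyNz : y ∈ Nin A z := hAyz
    obtain ⟨p, hpNz, hpy⟩ : ∃ p ∈ Nin A z, p ≠ y := by
      rw [hnz] at hyNz ⊢
      rcases hyNz with rfl | rfl
      · exact ⟨b, Or.inr rfl, (Ne.symm hab)⟩
      · exact ⟨a, Or.inl rfl, hab⟩
    have hpz : p ≠ z := fun h => hA z (h ▸ hpNz)
    have hpS : p ∈ S := by
      by_contra hpS
      have : p ∈ Sᶜ := hpS
      rw [hz] at this
      rcases this with h | h
      · exact hpy h
      · exact hpz h
    by_cases hApy : A p y
    · -- then use q, the other in-neighbor of y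
      have hniny : (Nin A y).ncard = 2 := nin_ncard hcard hA htour hreg y
      obtain ⟨c, d, hcd, hny⟩ := Set.ncard_eq_two.mp hniny
      have hpNy : p ∈ Nin A y := hApy
      obtain ⟨q, hqNy, hqp⟩ : ∃ q ∈ Nin A y, q ≠ p := by
        rw [hny] at hpNy ⊢
        rcases hpNy with rfl | rfl
        · exact ⟨d, Or.inr rfl, (Ne.symm hcd)⟩
        · exact ⟨c, Or.inl rfl, hcd⟩
      have hqy : q ≠ y := fun h => hA y (h ▸ hqNy)
      have hzNy : z ∉ Nin A y := fun h => ((htour z y (Ne.symm hyz)).1 h) hAyz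
      have hqz : q ≠ z := fun h => hzNy (h ▸ hqNy)
      have hqS : q ∈ S := by
        by_contra hqS
        have : q ∈ Sᶜ := hqS
        rw [hz] at this
        rcases this with h | h
        · exact hqy h
        · exact hqz h
      -- Nin A z = {y, p}
      have hNzeq : Nin A z = {y, p} := by
        symm
        refine Set.eq_of_subset_of_ncard_le ?_ ?_ (Set.toFinite _)
        · intro x hx; rcases hx with rfl | rfl
          · exact hyNz
          · exact hpNz
        · rw [hninz, Set.ncard_pair (Ne.symm hpy)]
      have hqNz : q ∉ Nin A z := by
        rw [hNzeq]
        intro h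
        rcases h with h | h
        · exact hqy h
        · exact hqp h
      refine ⟨y, hyS, Or.inr ⟨q, hqS, ?_⟩⟩
      apply Set.Subset.antisymm
      · intro x hx
        have hxc : x ∈ Sᶜ := hx.2
        rw [hz] at hxc
        rcases hxc with rfl | rfl
        · rfl
        · exact absurd hx.1 hqNz
      · intro x hx; rcases hx with rfl; exact ⟨hqNy, hyS⟩
    · -- p forces z
      refine ⟨z, hzS, Or.inr ⟨p, hpS, ?_⟩⟩
      apply Set.Subset.antisymm
      · intro x hx
        have hxc : x ∈ Sᶜ := hx.2
        rw [hz] at hxc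
        rcases hxc with rfl | rfl
        · exact absurd hx.1 hApy
        · rfl
      · intro x hx; rcases hx with rfl; exact ⟨hpNz, hzS⟩
  by_cases hAyz : A y z
  · exact key y z hyz hz hAyz
  · have hAzy : A z y := (htour z y (Ne.symm hyz)).2 hAyz
    exact key z y (Ne.symm hyz) (by rw [hz, Set.pair_comm]) hAzy

lemma step2 {S : Set V} (h2 : S.ncard = 2) : ∃ w ∉ S, w ∈ Bstep A S := by
  obtain ⟨u, v, huv, hS⟩ := Set.ncard_eq_two.mp h2
  have key : ∀ u v : V, u ≠ v → S = {u, v} → A u v → ∃ w ∉ S, w ∈ Bstep A S := by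
    clear huv hS u v
    intro u v huv hS hAuv
    obtain ⟨a, b, hab, hnu⟩ := Set.ncard_eq_two.mp (hreg u)
    have hvNu : v ∈ Nout A u := hAuv
    obtain ⟨x, hxNu, hxv⟩ : ∃ x ∈ Nout A u, x ≠ v := by
      rw [hnu] at hvNu ⊢
      rcases hvNu with rfl | rfl
      · exact ⟨b, Or.inr rfl, (Ne.symm hab)⟩
      · exact ⟨a, Or.inl rfl, hab⟩
    have hxu : x ≠ u := fun h => hA u (h ▸ hxNu)
    have hxS : x ∉ S := by
      rw [hS]; intro h
      rcases h with h | h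
      · exact hxu h
      · exact hxv h
    have hNueq : Nout A u = {v, x} := by
      symm
      refine Set.eq_of_subset_of_ncard_le ?_ ?_ (Set.toFinite _)
      · intro w hw; rcases hw with rfl | rfl
        · exact hvNu
        · exact hxNu
      · rw [hreg u, Set.ncard_pair (Ne.symm hxv)]
    refine ⟨x, hxS, Or.inr ⟨u, by rw [hS]; exact Or.inl rfl, ?_⟩⟩
    apply Set.Subset.antisymm
    · intro w hw
      have : w ∈ Nout A u := hw.1
      rw [hNueq] at this
      rcases this with rfl | rfl
      · exact absurd (by rw [hS]; exact Or.inr rfl) hw.2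
      · rfl
    · intro w hw; rcases hw with rfl; exact ⟨hxNu, hxS⟩
  by_cases hAuv : A u v
  · exact key u v huv hS hAuv
  · have : A v u := (htour v u (Ne.symm huv)).2 hAuv
    exact key v u (Ne.symm huv) (by rw [hS, Set.pair_comm]) this

lemma zfs_two {S : Set V} (h2 : S.ncard = 2) : IsZFS A S := by
  obtain ⟨w3, hw3S, hw3⟩ := step2 hcard hA htour hreg h2
  set T3 : Set V := insert w3 S with hT3
  have hT3card : T3.ncard = 3 := by
    rw [hT3, Set.ncard_insert_of_notMem hw3S, h2]
  obtain ⟨w4, hw4T, hw4⟩ := step3 hcard hA htour hreg hT3card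
  set T4 : Set V := insert w4 T3 with hT4
  have hT4card : T4.ncard = 4 := by
    rw [hT4, Set.ncard_insert_of_notMem hw4T, hT3card]
  have hT3sub : T3 ⊆ Bstep A S := by
    intro x hx
    rcases hx with rfl | hx
    · exact hw3
    · exact subset_bstep S hx
  have hT4sub : T4 ⊆ Bstep A T3 := by
    intro x hx
    rcases hx with rfl | hx
    · exact hw4
    · exact subset_bstep T3 hx
  refine ⟨3, ?_⟩
  apply Set.eq_univ_of_univ_subset
  calc Set.univ = Bstep A T4 := (step4 hcard hA htour hreg hT4card).symm
    _ ⊆ Bstep A (Bstep A T3) := bstep_mono hT4sub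
    _ ⊆ Bstep A (Bstep A (Bstep A S)) := bstep_mono (bstep_mono hT3sub)
    _ = (Bstep A)^[3] S := by
        rw [show (3:ℕ) = 2 + 1 from rfl, Function.iterate_succ_apply,
          Function.iterate_succ_apply, Function.iterate_succ_apply,
          Function.iterate_zero_apply]

lemma not_zfs_small {S : Set V} (h : S.ncard ≤ 1) : ¬ IsZFS A S := by
  have hfix : Bstep A S = S := by
    rcases (Set.ncard_le_one_iff_eq S.toFinite).mp h with rfl | ⟨v, rfl⟩
    · apply Set.Subset.antisymm _ (subset_bstep _)
      rintro w (hw | ⟨u, hu, -⟩)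
      · exact hw
      · exact absurd hu (Set.notMem_empty u)
    · apply Set.Subset.antisymm _ (subset_bstep _)
      rintro w (hw | ⟨u, hu, huw⟩)
      · exact hw
      · rcases hu with rfl
        exfalso
        have hvN : u ∉ Nout A u := fun h' => hA u h'
        have : Nout A u \ {u} = Nout A u := Set.diff_singleton_eq_self hvN
        rw [this] at huw
        have := hreg u
        rw [huw, Set.ncard_singleton] at this
        omega
  rintro ⟨t, ht⟩
  have hiter : (Bstep A)^[t] S = S := Function.iterate_fixed hfix t
  rw [hiter] at ht
  have : S.ncard = 5 := by
    rw [ht, Set.ncard_univ, Nat.card_eq_fintype_card, hcard]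
  omega

end aux

theorem stmt_12 {V : Type} [Fintype V] (A : V → V → Prop)
    (hcard : Fintype.card V = 5) (hA : Irreflexive A)
    (htour : ∀ u v : V, u ≠ v → (A u v ↔ ¬ A v u))
    (hreg : ∀ v : V, (Nout A v).ncard = 2) :
    Fnum A = 1 ∧ Znum A = 2 ∧ ∀ S : Set V, S.ncard = 2 → IsZFS A S := by
  have hzfs2 : ∀ S : Set V, S.ncard = 2 → IsZFS A S := fun S h =>
    zfs_two hcard hA htour hreg h
  have hzfs_ge2 : ∀ S : Set V, 2 ≤ S.ncard → IsZFS A S := by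
    intro S hS
    obtain ⟨T, hTS, hT⟩ := Set.exists_subset_card_eq hS
    exact isZFS_mono hTS (hzfs2 T hT)
  -- a failed singleton exists
  have : Nonempty V := Fintype.card_pos_iff.mp (by omega)
  obtain ⟨v⟩ := this
  have h1mem : (1 : ℕ) ∈ {k | ∃ S : Set V, ¬ IsZFS A S ∧ S.ncard = k} :=
    ⟨{v}, not_zfs_small hcard hA htour hreg (by simp), Set.ncard_singleton v⟩
  have hbd : ∀ k ∈ {k | ∃ S : Set V, ¬ IsZFS A S ∧ S.ncard = k}, k ≤ 1 := by
    rintro k ⟨S, hSnot, rfl⟩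
    by_contra hk
    exact hSnot (hzfs_ge2 S (by omega))
  refine ⟨?_, ?_, hzfs2⟩
  · refine le_antisymm (csSup_le ⟨1, h1mem⟩ hbd) (le_csSup ⟨1, hbd⟩ h1mem)
  · have h2mem : (2 : ℕ) ∈ {k | ∃ S : Set V, IsZFS A S ∧ S.ncard = k} := by
      obtain ⟨T, -, hT⟩ := Set.exists_subset_card_eq
        (show 2 ≤ (Set.univ : Set V).ncard by
          rw [Set.ncard_univ, Nat.card_eq_fintype_card, hcard]; omega)
      exact ⟨T, hzfs2 T hT, hT⟩
    refine le_antisymm (Nat.sInf_le h2mem) ?_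
    apply le_csInf ⟨2, h2mem⟩
    rintro k ⟨S, hS, rfl⟩
    by_contra hk
    exact not_zfs_small hcard hA htour hreg (by omega) hS
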